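/- arXiv:math/9910065 — 7 statements merged into one kernel-verified Lean document; each statement's English description precedes it below -/
import Mathlib

section
/- Let G be a group and C ⊆ G a normal cone whose induced relation ≥ is a partial order. Let f be a dominant and g ∈ G. Then the limit γ(f,g) = lim_{k→∞} γ_k(f,g)/k exists as a real number (the relative growth number of f with respect to g). -/
open Filter

/-- A subset `C` of a group is a *normal cone* if it contains `1`, is closed under
multiplication, and is invariant under conjugation. -/
def IsNormalCone {G : Type*} [Group G] (C : Set G) : Prop :=
  (1 : G) ∈ C ∧ (∀ f g : G, f ∈ C → g ∈ C → f * g ∈ C) ∧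
    (∀ f h : G, f ∈ C → h * f * h⁻¹ ∈ C)

/-- The relation `f ≥ g` induced by the cone `C`: `f * g⁻¹ ∈ C`. -/
def ConeGe {G : Type*} [Group G] (C : Set G) (f g : G) : Prop := f * g⁻¹ ∈ C

/-- `f` is a *dominant*: it lies in the cone, is not `1`, and some power of `f`
dominates any given element. -/
def IsDominant {G : Type*} [Group G] (C : Set G) (f : G) : Prop :=
  f ∈ C ∧ f ≠ 1 ∧ ∀ g : G, ∃ p : ℕ, ConeGe C (f ^ p) g

/-- `γ_k(f,g) = inf { p ∈ ℤ | f^p ≥ g^k }`. -/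
noncomputable def gammaK {G : Type*} [Group G] (C : Set G) (f g : G) (k : ℕ) : ℤ :=
  sInf {p : ℤ | ConeGe C (f ^ p) (g ^ k)}

/-- The relative growth number `γ(f,g)`, i.e. the limit of `γ_k(f,g)/k`, exists. -/
theorem statement3 {G : Type*} [Group G] (C : Set G) (hC : IsNormalCone C)
    (hanti : ∀ f g : G, ConeGe C f g → ConeGe C g f → f = g)
    (f g : G) (hf : IsDominant C f) :
    ∃ L : ℝ, Tendsto (fun k : ℕ => (gammaK C f g k : ℝ) / (k : ℝ)) atTop (nhds L) := by
  obtain ⟨h1, hmul, hconj⟩ := hC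
  obtain ⟨hf1, hfne, hdom⟩ := hf
  -- natural powers of f are in C
  have hpow : ∀ n : ℕ, f ^ n ∈ C := by
    intro n
    induction n with
    | zero => simpa using h1
    | succ n ih => rw [pow_succ]; exact hmul _ _ ih hf1
  -- if f^m ∈ C then m ≥ 0
  have hzpow_nonneg : ∀ m : ℤ, f ^ m ∈ C → 0 ≤ m := by
    intro m hm
    by_contra hneg
    push_neg at hneg
    have hfi : f⁻¹ ∈ C := by
      have h2 : f ^ ((-m - 1).toNat) ∈ C := hpow _
      have he : f ^ m * f ^ ((-m - 1).toNat) = f⁻¹ := by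
        rw [← zpow_natCast f ((-m - 1).toNat), Int.toNat_of_nonneg (by omega), ← zpow_add,
          show m + (-m - 1) = -1 by ring, zpow_neg_one]
      rw [← he]
      exact hmul _ _ hm h2
    have : f = 1 := hanti f 1 (by simpa [ConeGe] using hf1) (by simpa [ConeGe] using hfi)
    exact hfne this
  -- fix q with f^q * g ∈ C
  obtain ⟨q, hq⟩ := hdom g⁻¹
  have hq' : f ^ q * g ∈ C := by simpa [ConeGe] using hq
  -- f^(q*k) * g^k ∈ C for all k
  have hkey : ∀ k : ℕ, f ^ (q * k) * g ^ k ∈ C := by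
    intro k
    induction k with
    | zero => simpa using h1
    | succ k ih =>
      have := hmul _ _ (hconj (f ^ q * g) (f ^ (q * k)) hq') ih
      have he : f ^ (q * k) * (f ^ q * g) * (f ^ (q * k))⁻¹ * (f ^ (q * k) * g ^ k)
          = f ^ (q * (k + 1)) * g ^ (k + 1) := by
        rw [mul_add, mul_one, pow_add, pow_succ]
        group
      rwa [he] at this
  -- elements of the defining set are bounded below
  have hlb : ∀ k : ℕ, ∀ p ∈ {p : ℤ | ConeGe C (f ^ p) (g ^ k)}, -(q * k : ℤ) ≤ p := by
    intro k p hp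
    have hgk : g ^ k * f ^ (q * k) ∈ C := by
      have := hconj (f ^ (q * k) * g ^ k) (g ^ k) (hkey k)
      have he : g ^ k * (f ^ (q * k) * g ^ k) * (g ^ k)⁻¹ = g ^ k * f ^ (q * k) := by group
      rwa [he] at this
    have hmem : f ^ (p + (q * k : ℤ)) ∈ C := by
      have := hmul _ _ hp hgk
      have he : f ^ p * (g ^ k)⁻¹ * (g ^ k * f ^ (q * k)) = f ^ (p + (q * k : ℤ)) := by
        rw [zpow_add, ← zpow_natCast f (q * k)]
        push_cast
        group
      rwa [he] at this
    have := hzpow_nonneg _ hmem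
    omega
  have hbdd : ∀ k : ℕ, BddBelow {p : ℤ | ConeGe C (f ^ p) (g ^ k)} :=
    fun k => ⟨-(q * k : ℤ), fun p hp => hlb k p hp⟩
  have hne : ∀ k : ℕ, ({p : ℤ | ConeGe C (f ^ p) (g ^ k)}).Nonempty := by
    intro k
    obtain ⟨p, hp⟩ := hdom (g ^ k)
    exact ⟨(p : ℤ), by simpa [ConeGe, zpow_natCast] using hp⟩
  have hmem : ∀ k : ℕ, gammaK C f g k ∈ {p : ℤ | ConeGe C (f ^ p) (g ^ k)} :=
    fun k => Int.csInf_mem (hne k) (hbdd k)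
  have hgamma_lb : ∀ k : ℕ, -(q * k : ℤ) ≤ gammaK C f g k :=
    fun k => hlb k _ (hmem k)
  -- subadditivity
  have hsub : ∀ m n : ℕ, gammaK C f g (m + n) ≤ gammaK C f g m + gammaK C f g n := by
    intro m n
    set a := gammaK C f g m with ha
    set b := gammaK C f g n with hb
    have hma : f ^ a * (g ^ m)⁻¹ ∈ C := hmem m
    have hmb : f ^ b * (g ^ n)⁻¹ ∈ C := hmem n
    have : a + b ∈ {p : ℤ | ConeGe C (f ^ p) (g ^ (m + n))} := by
      have := hmul _ _ (hconj (f ^ b * (g ^ n)⁻¹) (f ^ a) hmb) hma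
      have he : f ^ a * (f ^ b * (g ^ n)⁻¹) * (f ^ a)⁻¹ * (f ^ a * (g ^ m)⁻¹)
          = f ^ (a + b) * (g ^ (m + n))⁻¹ := by
        rw [zpow_add, pow_add, mul_inv_rev]
        group
      rw [he] at this
      exact this
    exact csInf_le (hbdd (m + n)) this
  -- apply Fekete's lemma
  have hSub : Subadditive (fun k : ℕ => (gammaK C f g k : ℝ)) := by
    intro m n
    have := hsub m n
    push_cast
    exact_mod_cast this
  have hBdd : BddBelow (Set.range fun n : ℕ => ((gammaK C f g n : ℝ)) / (n : ℝ)) := by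
    refine ⟨-(q : ℝ), ?_⟩
    rintro x ⟨n, rfl⟩
    rcases Nat.eq_zero_or_pos n with hn | hn
    · subst hn; simp
    · have h1 : (-(q * n : ℤ) : ℝ) ≤ (gammaK C f g n : ℝ) := by exact_mod_cast hgamma_lb n
      have hn' : (0 : ℝ) < (n : ℝ) := by exact_mod_cast hn
      rw [le_div_iff₀ hn']
      push_cast at h1 ⊢
      linarith
  exact ⟨hSub.lim, hSub.tendsto_lim hBdd⟩
end

section
/- Let G be a group and C ⊆ G a normal cone whose induced relation ≥ is a partial order. If f and g are both dominants, then γ(f,g)·γ(g,f) ≥ 1. -/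
open Filter

section aux
variable {G : Type*} [Group G] {C : Set G}

lemma cone_trans (hC : IsNormalCone C) {a b c : G} (h1 : ConeGe C a b) (h2 : ConeGe C b c) :
    ConeGe C a c := by
  have := hC.2.1 _ _ h1 h2
  simpa [ConeGe, mul_assoc] using this

lemma cone_mul (hC : IsNormalCone C) {a b u v : G} (h1 : ConeGe C a b) (h2 : ConeGe C u v) :
    ConeGe C (a * u) (b * v) := by
  have := hC.2.1 _ _ (hC.2.2 _ a h2) h1
  simpa [ConeGe, mul_assoc, mul_inv_rev] using this

lemma cone_pow (hC : IsNormalCone C) {f : G} (hf : f ∈ C) : ∀ n : ℕ, f ^ n ∈ C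
  | 0 => by simpa using hC.1
  | n + 1 => by
    have := hC.2.1 _ _ (cone_pow hC hf n) hf
    simpa [pow_succ] using this

lemma cone_zpow_nonneg (hC : IsNormalCone C) {f : G} (hf : f ∈ C) {p : ℤ} (hp : 0 ≤ p) :
    f ^ p ∈ C := by
  obtain ⟨n, rfl⟩ := Int.eq_ofNat_of_zero_le hp
  simpa [zpow_natCast] using cone_pow hC hf n

lemma nonneg_of_zpow_mem (hC : IsNormalCone C)
    (hanti : ∀ f g : G, ConeGe C f g → ConeGe C g f → f = g)
    {f : G} (hf : f ∈ C) (hne : f ≠ 1) {p : ℤ} (hp : f ^ p ∈ C) : 0 ≤ p := by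
  by_contra h
  push_neg at h
  have h2 : f ^ (-1 - p) ∈ C := cone_zpow_nonneg hC hf (by omega)
  have h1 : f⁻¹ ∈ C := by
    have h3 := hC.2.1 _ _ hp h2
    rw [← zpow_add] at h3
    have : p + (-1 - p) = -1 := by ring
    rw [this] at h3
    simpa using h3
  exact hne (hanti f 1 (by simpa [ConeGe] using hf) (by simpa [ConeGe] using h1))
end aux

section aux2
variable {G : Type*} [Group G] {C : Set G}

lemma gammaS_nonempty (hf : IsDominant C f) (g : G) (k : ℕ) :
    {p : ℤ | ConeGe C (f ^ p) (g ^ k)}.Nonempty := by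
  obtain ⟨p, hp⟩ := hf.2.2 (g ^ k)
  exact ⟨(p : ℤ), by simpa [zpow_natCast] using hp⟩

lemma mem_nonneg (hC : IsNormalCone C)
    (hanti : ∀ f g : G, ConeGe C f g → ConeGe C g f → f = g)
    {f g : G} (hf : IsDominant C f) (hg : g ∈ C) {k : ℕ} {p : ℤ}
    (hp : ConeGe C (f ^ p) (g ^ k)) : 0 ≤ p := by
  have hfp : f ^ p ∈ C := by
    have := hC.2.1 _ _ hp (cone_pow hC hg k)
    simpa [mul_assoc] using this
  exact nonneg_of_zpow_mem hC hanti hf.1 hf.2.1 hfp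

lemma gammaS_bddBelow (hC : IsNormalCone C)
    (hanti : ∀ f g : G, ConeGe C f g → ConeGe C g f → f = g)
    {f g : G} (hf : IsDominant C f) (hg : g ∈ C) (k : ℕ) :
    BddBelow {p : ℤ | ConeGe C (f ^ p) (g ^ k)} :=
  ⟨0, fun _ hp => mem_nonneg hC hanti hf hg hp⟩

lemma gammaK_spec (hC : IsNormalCone C)
    (hanti : ∀ f g : G, ConeGe C f g → ConeGe C g f → f = g)
    {f g : G} (hf : IsDominant C f) (hg : g ∈ C) (k : ℕ) :
    ConeGe C (f ^ gammaK C f g k) (g ^ k) :=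
  Int.csInf_mem (gammaS_nonempty hf g k) (gammaS_bddBelow hC hanti hf hg k)

lemma gammaK_nonneg (hC : IsNormalCone C)
    (hanti : ∀ f g : G, ConeGe C f g → ConeGe C g f → f = g)
    {f g : G} (hf : IsDominant C f) (hg : g ∈ C) (k : ℕ) :
    0 ≤ gammaK C f g k :=
  le_csInf (gammaS_nonempty hf g k) (fun _ hp => mem_nonneg hC hanti hf hg hp)

lemma mem_one_le (hC : IsNormalCone C)
    (hanti : ∀ f g : G, ConeGe C f g → ConeGe C g f → f = g)
    {f g : G} (hf : IsDominant C f) (hg : IsDominant C g) {k : ℕ} (hk : 1 ≤ k)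
    {p : ℤ} (hp : ConeGe C (f ^ p) (g ^ k)) : 1 ≤ p := by
  by_contra h
  push_neg at h
  have h0 : f ^ (-p) ∈ C := cone_zpow_nonneg hC hf.1 (by omega)
  have h1 : ConeGe C 1 (f ^ p) := by simpa [ConeGe, zpow_neg] using h0
  have h2 : ConeGe C 1 (g ^ k) := cone_trans hC h1 hp
  have h3 : g ^ (-(k : ℤ)) ∈ C := by
    simpa [ConeGe, zpow_neg, zpow_natCast] using h2
  have := nonneg_of_zpow_mem hC hanti hg.1 hg.2.1 h3
  omega

lemma gammaK_one_le (hC : IsNormalCone C)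
    (hanti : ∀ f g : G, ConeGe C f g → ConeGe C g f → f = g)
    {f g : G} (hf : IsDominant C f) (hg : IsDominant C g) {k : ℕ} (hk : 1 ≤ k) :
    1 ≤ gammaK C f g k :=
  le_csInf (gammaS_nonempty hf g k) (fun _ hp => mem_one_le hC hanti hf hg hk hp)

lemma gammaK_le_mul (hC : IsNormalCone C)
    (hanti : ∀ f g : G, ConeGe C f g → ConeGe C g f → f = g)
    {f g : G} (hf : IsDominant C f) (hg : g ∈ C) (m : ℕ) :
    gammaK C f g m ≤ (m : ℤ) * gammaK C f g 1 := by
  set c := gammaK C f g 1 with hc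
  have h1 : ConeGe C (f ^ c) g := by
    have := gammaK_spec hC hanti hf hg 1
    simpa using this
  have key : ∀ m : ℕ, ConeGe C (f ^ ((m : ℤ) * c)) (g ^ m) := by
    intro m
    induction m with
    | zero => simpa [ConeGe] using hC.1
    | succ n ih =>
      have := cone_mul hC ih h1
      rw [← zpow_add] at this
      have he : (n : ℤ) * c + c = ((n : ℕ) + 1 : ℤ) * c := by ring
      rw [he] at this
      simpa [pow_succ] using this
  exact csInf_le (gammaS_bddBelow hC hanti hf hg m) (key m)
end aux2

/-- If `f` and `g` are both dominants then `γ(f,g) * γ(g,f) ≥ 1`. -/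
theorem statement4 {G : Type*} [Group G] (C : Set G) (hC : IsNormalCone C)
    (hanti : ∀ f g : G, ConeGe C f g → ConeGe C g f → f = g)
    (f g : G) (hf : IsDominant C f) (hg : IsDominant C g)
    (A B : ℝ)
    (hA : Tendsto (fun k : ℕ => (gammaK C f g k : ℝ) / (k : ℝ)) atTop (nhds A))
    (hB : Tendsto (fun k : ℕ => (gammaK C g f k : ℝ) / (k : ℝ)) atTop (nhds B)) :
    1 ≤ A * B := by
  set a : ℕ → ℤ := fun k => gammaK C f g k with ha
  set n : ℕ → ℕ := fun k => (a k).toNat with hn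
  have hna : ∀ k : ℕ, ((n k : ℤ)) = a k := by
    intro k
    simp only [hn]
    exact Int.toNat_of_nonneg (gammaK_nonneg hC hanti hf hg.1 k)
  -- key: k ≤ gammaK C g f (n k)
  have hkey : ∀ k : ℕ, (k : ℤ) ≤ gammaK C g f (n k) := by
    intro k
    set b := gammaK C g f (n k) with hb
    have h1 : ConeGe C (g ^ b) (f ^ (n k)) := gammaK_spec hC hanti hg hf.1 (n k)
    have h2 : ConeGe C (f ^ (a k)) (g ^ k) := gammaK_spec hC hanti hf hg.1 k
    have h1' : ConeGe C (g ^ b) (f ^ (a k)) := by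
      rwa [← hna k, zpow_natCast] at h2 ⊢
    have h3 : ConeGe C (g ^ b) (g ^ k) := cone_trans hC h1' h2
    have h4 : g ^ (b - (k : ℤ)) ∈ C := by
      have : g ^ b * (g ^ k)⁻¹ ∈ C := h3
      rwa [← zpow_natCast g k, ← zpow_neg, ← zpow_add, ← sub_eq_add_neg] at this
    have := nonneg_of_zpow_mem hC hanti hg.1 hg.2.1 h4
    omega
  -- c := gammaK C g f 1 ≥ 1 and k ≤ n k * c
  set c := gammaK C g f 1 with hc
  have hc1 : 1 ≤ c := gammaK_one_le hC hanti hg hf le_rfl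
  have hbound : ∀ k : ℕ, (k : ℤ) ≤ (n k : ℤ) * c := fun k =>
    le_trans (hkey k) (gammaK_le_mul hC hanti hg hf.1 (n k))
  -- n tends to infinity
  have htend : Tendsto n atTop atTop := by
    rw [tendsto_atTop_atTop]
    intro b
    refine ⟨c.toNat * b, fun k hk => ?_⟩
    have h1 : (c.toNat : ℤ) = c := Int.toNat_of_nonneg (by omega)
    have h2 : (c : ℤ) * (b : ℤ) ≤ (k : ℤ) := by
      have := Int.ofNat_le.mpr hk
      push_cast at this
      rw [← h1]; linarith
    have h3 := hbound k
    nlinarith [h2, h3, hc1, Int.ofNat_nonneg (n k), Int.ofNat_nonneg b]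
  -- the product sequence
  have hF : Tendsto (fun k : ℕ =>
      (gammaK C g f (n k) : ℝ) / (n k : ℝ) * ((gammaK C f g k : ℝ) / (k : ℝ)))
      atTop (nhds (B * A)) := (hB.comp htend).mul hA
  have h1le : ∀ᶠ k : ℕ in atTop, 1 ≤
      (gammaK C g f (n k) : ℝ) / (n k : ℝ) * ((gammaK C f g k : ℝ) / (k : ℝ)) := by
    filter_upwards [eventually_ge_atTop 1] with k hk
    have hak1 : 1 ≤ a k := gammaK_one_le hC hanti hf hg hk
    have hnk1 : 1 ≤ n k := by
      have := hna k; omega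
    have hnR : (0 : ℝ) < (n k : ℝ) := by exact_mod_cast hnk1
    have hkR : (0 : ℝ) < (k : ℝ) := by exact_mod_cast hk
    have hanR : ((gammaK C f g k : ℤ) : ℝ) = (n k : ℝ) := by
      have h := hna k
      simp only [ha] at h
      exact_mod_cast h.symm
    have hbk : (k : ℝ) ≤ ((gammaK C g f (n k) : ℤ) : ℝ) := by exact_mod_cast hkey k
    rw [hanR, div_mul_div_comm, mul_comm (n k : ℝ) (k : ℝ), ← div_mul_div_comm,
      div_self (ne_of_gt hnR), mul_one, le_div_iff₀ hkR, one_mul]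
    exact hbk
  have : 1 ≤ B * A := ge_of_tendsto hF h1le
  linarith [this, mul_comm A B]
end

section
/- Let G be a group and C ⊆ G a normal cone whose induced relation ≥ is a partial order. If f and g are both dominants, then γ_k(f,g) ≥ 1 for every integer k ≥ 1, and consequently γ(f,g) > 0 and γ(g,f) > 0. -/
open Filter

section Aux

variable {G : Type*} [Group G] {C : Set G}

lemma coneGe_mul (hC : IsNormalCone C) {x y x' y' : G}
    (h : ConeGe C x y) (h' : ConeGe C x' y') : ConeGe C (x * x') (y * y') := by
  have e : x * x' * (y * y')⁻¹ = (x * y⁻¹) * (y * (x' * y'⁻¹) * y⁻¹) := by group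
  unfold ConeGe at *
  rw [e]
  exact hC.2.1 _ _ h (hC.2.2 _ _ h')

lemma coneGe_pow (hC : IsNormalCone C) {x y : G} (h : ConeGe C x y) :
    ∀ n : ℕ, ConeGe C (x ^ n) (y ^ n)
  | 0 => by simpa [ConeGe] using hC.1
  | n + 1 => by
      rw [pow_succ, pow_succ]
      exact coneGe_mul hC (coneGe_pow hC h n) h

lemma conePow_mem (hC : IsNormalCone C) {g : G} (hg : g ∈ C) (n : ℕ) : g ^ n ∈ C := by
  have := coneGe_pow hC (x := g) (y := 1) (by simpa [ConeGe] using hg) n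
  simpa [ConeGe] using this

lemma zpow_mem_nonneg (hC : IsNormalCone C)
    (hanti : ∀ f g : G, ConeGe C f g → ConeGe C g f → f = g)
    {g : G} (hg : g ∈ C) (hg1 : g ≠ 1) {n : ℤ} (hn : g ^ n ∈ C) : 0 ≤ n := by
  by_contra h
  push_neg at h
  have hpos : (1 : ℤ) ≤ -n := by omega
  have h1 : g ^ (-n) ∈ C := by
    have := conePow_mem hC hg (-n).toNat
    rwa [← zpow_natCast, Int.toNat_of_nonneg (by omega)] at this
  have heq : g ^ n = 1 := by
    apply hanti
    · simpa [ConeGe] using hn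
    · simpa [ConeGe, zpow_neg] using h1
  have heq' : g ^ (-n) = 1 := by rw [zpow_neg, heq, inv_one]
  have hginv : g⁻¹ ∈ C := by
    have h2 : g ^ (-n - 1) ∈ C := by
      have := conePow_mem hC hg (-n - 1).toNat
      rwa [← zpow_natCast, Int.toNat_of_nonneg (by omega)] at this
    have : g ^ (-n - 1) = g⁻¹ := by
      rw [sub_eq_add_neg, zpow_add, heq', one_mul, zpow_neg_one]
    rwa [this] at h2
  exact hg1 (hanti g 1 (by simpa [ConeGe] using hg) (by simpa [ConeGe] using hginv))

lemma gammaK_bounds (hC : IsNormalCone C)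
    (hanti : ∀ f g : G, ConeGe C f g → ConeGe C g f → f = g)
    {f g : G} (hf : IsDominant C f) (hg : IsDominant C g)
    {q : ℕ} (hq : ConeGe C (g ^ q) f) {k : ℕ} (hk : 1 ≤ k) :
    1 ≤ gammaK C f g k ∧ (k : ℤ) ≤ (q : ℤ) * gammaK C f g k := by
  set S : Set ℤ := {p : ℤ | ConeGe C (f ^ p) (g ^ k)} with hS
  have hboth : ∀ p ∈ S, 1 ≤ p ∧ (k : ℤ) ≤ (q : ℤ) * p := by
    intro p hp
    have hp' : f ^ p * (g ^ k)⁻¹ ∈ C := hp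
    have hp1 : 1 ≤ p := by
      by_contra hle
      push_neg at hle
      have hfp : f ^ (-p) ∈ C := by
        have := conePow_mem hC hf.1 (-p).toNat
        rwa [← zpow_natCast, Int.toNat_of_nonneg (by omega)] at this
      have : g ^ (-(k : ℤ)) ∈ C := by
        have := hC.2.1 _ _ hfp hp'
        rw [← mul_assoc, ← zpow_add, neg_add_cancel, zpow_zero, one_mul] at this
        rwa [zpow_neg, zpow_natCast]
      have := zpow_mem_nonneg hC hanti hg.1 hg.2.1 this
      omega
    refine ⟨hp1, ?_⟩
    set m : ℕ := p.toNat with hm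
    have hpm : (m : ℤ) = p := Int.toNat_of_nonneg (by omega)
    have hgm : (g ^ q) ^ m * (f ^ m)⁻¹ ∈ C := coneGe_pow hC hq m
    have hfm : f ^ m * (g ^ k)⁻¹ ∈ C := by
      rw [← zpow_natCast, hpm]; exact hp'
    have hgg : g ^ ((q * m : ℕ) : ℤ) * g ^ (-(k : ℤ)) ∈ C := by
      have := hC.2.1 _ _ hgm hfm
      rw [mul_assoc, ← mul_assoc (f ^ m)⁻¹, inv_mul_cancel, one_mul] at this
      rwa [zpow_natCast, zpow_neg, zpow_natCast, pow_mul]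
    rw [← zpow_add] at hgg
    have := zpow_mem_nonneg hC hanti hg.1 hg.2.1 hgg
    push_cast at this ⊢
    rw [← hpm]
    push_cast
    omega
  have hne : S.Nonempty := by
    obtain ⟨p, hp⟩ := hf.2.2 (g ^ k)
    exact ⟨(p : ℤ), by simpa [hS, ConeGe, zpow_natCast] using hp⟩
  have hbdd : BddBelow S := ⟨1, fun p hp => (hboth p hp).1⟩
  have hmem : sInf S ∈ S := Int.csInf_mem hne hbdd
  exact hboth _ hmem

end Aux

/-- If `f` and `g` are both dominants then `γ_k(f,g) ≥ 1` for every `k ≥ 1`, and both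
relative growth numbers are strictly positive. -/
theorem statement5 {G : Type*} [Group G] (C : Set G) (hC : IsNormalCone C)
    (hanti : ∀ f g : G, ConeGe C f g → ConeGe C g f → f = g)
    (f g : G) (hf : IsDominant C f) (hg : IsDominant C g)
    (A B : ℝ)
    (hA : Tendsto (fun k : ℕ => (gammaK C f g k : ℝ) / (k : ℝ)) atTop (nhds A))
    (hB : Tendsto (fun k : ℕ => (gammaK C g f k : ℝ) / (k : ℝ)) atTop (nhds B)) :
    (∀ k : ℕ, 1 ≤ k → 1 ≤ gammaK C f g k) ∧ 0 < A ∧ 0 < B := by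
  -- obtain q ≥ 1 with g^q ≥ f, and r ≥ 1 with f^r ≥ g
  obtain ⟨q, hq⟩ := hg.2.2 f
  obtain ⟨r, hr⟩ := hf.2.2 g
  have hq' : ConeGe C (g ^ (q + 1)) f := by
    have : g * (g ^ q * f⁻¹) ∈ C := hC.2.1 _ _ hg.1 hq
    simpa [ConeGe, pow_succ', mul_assoc] using this
  have hr' : ConeGe C (f ^ (r + 1)) g := by
    have : f * (f ^ r * g⁻¹) ∈ C := hC.2.1 _ _ hf.1 hr
    simpa [ConeGe, pow_succ', mul_assoc] using this
  have key1 : ∀ k : ℕ, 1 ≤ k →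
      1 ≤ gammaK C f g k ∧ (k : ℤ) ≤ ((q + 1 : ℕ) : ℤ) * gammaK C f g k :=
    fun k hk => gammaK_bounds hC hanti hf hg hq' hk
  have key2 : ∀ k : ℕ, 1 ≤ k →
      1 ≤ gammaK C g f k ∧ (k : ℤ) ≤ ((r + 1 : ℕ) : ℤ) * gammaK C g f k :=
    fun k hk => gammaK_bounds hC hanti hg hf hr' hk
  refine ⟨fun k hk => (key1 k hk).1, ?_, ?_⟩
  · have hle : (1 : ℝ) / (q + 1 : ℕ) ≤ A := by
      apply ge_of_tendsto hA
      filter_upwards [eventually_ge_atTop 1] with k hk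
      have h2 := (key1 k hk).2
      rw [div_le_div_iff₀ (by positivity) (by exact_mod_cast hk)]
      have : (k : ℝ) ≤ ((q + 1 : ℕ) : ℝ) * (gammaK C f g k : ℝ) := by exact_mod_cast h2
      linarith [this]
    have : (0 : ℝ) < 1 / (q + 1 : ℕ) := by positivity
    linarith
  · have hle : (1 : ℝ) / (r + 1 : ℕ) ≤ B := by
      apply ge_of_tendsto hB
      filter_upwards [eventually_ge_atTop 1] with k hk
      have h2 := (key2 k hk).2
      rw [div_le_div_iff₀ (by positivity) (by exact_mod_cast hk)]
      have : (k : ℝ) ≤ ((r + 1 : ℕ) : ℝ) * (gammaK C g f k : ℝ) := by exact_mod_cast h2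
      linarith [this]
    have : (0 : ℝ) < 1 / (r + 1 : ℕ) := by positivity
    linarith
end

section
/- Let G be a group and C ⊆ G a normal cone whose induced relation ≥ is a partial order. Let f be a dominant, g ∈ G, and m ≥ 1 an integer. Then f^m is a dominant and the relative growth number is homogeneous under iterations: γ(f, g^m) = m·γ(f,g), γ(f^m, g) = γ(f,g)/m, and consequently γ(f^m, g^m) = γ(f,g). -/
open Filter

section Aux

variable {G : Type*} [Group G] {C : Set G}

lemma cone_pow_mem (hC : IsNormalCone C) {f : G} (hfC : f ∈ C) : ∀ n : ℕ, f ^ n ∈ C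
  | 0 => by simpa using hC.1
  | n + 1 => by
      rw [pow_succ]
      exact hC.2.1 _ _ (cone_pow_mem hC hfC n) hfC

lemma cone_zpow_mem (hC : IsNormalCone C) {f : G} (hfC : f ∈ C) {a : ℤ} (ha : 0 ≤ a) :
    f ^ a ∈ C := by
  lift a to ℕ using ha
  simpa using cone_pow_mem hC hfC a

lemma dominant_nonneg (hC : IsNormalCone C)
    (hanti : ∀ f g : G, ConeGe C f g → ConeGe C g f → f = g)
    {f : G} (hf : IsDominant C f) {a : ℤ} (h : f ^ a ∈ C) : 0 ≤ a := by
  by_contra hneg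
  push_neg at hneg
  have h2 : f ^ (-a) ∈ C := cone_zpow_mem hC hf.1 (by omega)
  have h3 : ConeGe C (f ^ a) 1 := by simpa [ConeGe] using h
  have h4 : ConeGe C 1 (f ^ a) := by simpa [ConeGe, ← zpow_neg] using h2
  have h5 : f ^ a = 1 := hanti _ _ h3 h4
  -- then f ^ (-a) = 1 with -a ≥ 1, so f⁻¹ = f ^ (-a - 1) ∈ C, hence f = 1
  have h6 : f ^ (-a) = 1 := by
    rw [zpow_neg, h5, inv_one]
  have h8 : f⁻¹ ∈ C := by
    have e : f ^ a * f ^ (-1 - a) = f⁻¹ := by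
      rw [← zpow_add]
      norm_num
    rw [← e, h5, one_mul]
    exact cone_zpow_mem hC hf.1 (by omega)
  have h9 : f = 1 := hanti f 1 (by simpa [ConeGe] using hf.1) (by simpa [ConeGe] using h8)
  exact hf.2.1 h9

/-- Key characterization: for a dominant `f` and any target `h`,
the set of exponents `p` with `f^p ≥ h` is exactly `Ici` of its infimum. -/
lemma cone_mem_iff_le (hC : IsNormalCone C)
    (hanti : ∀ f g : G, ConeGe C f g → ConeGe C g f → f = g)
    {f : G} (hf : IsDominant C f) (h : G) (p : ℤ) :
    ConeGe C (f ^ p) h ↔ sInf {q : ℤ | ConeGe C (f ^ q) h} ≤ p := by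
  set S : Set ℤ := {q : ℤ | ConeGe C (f ^ q) h} with hS
  obtain ⟨p0, hp0⟩ := hf.2.2 h
  have hne : S.Nonempty := ⟨(p0 : ℤ), by simpa [hS, Set.mem_setOf_eq, zpow_natCast] using hp0⟩
  obtain ⟨q0, hq0⟩ := hf.2.2 h⁻¹
  have hbdd : BddBelow S := by
    refine ⟨-(q0 : ℤ), fun p hp => ?_⟩
    -- hp : f^p * h⁻¹ ∈ C ; hq0 : f^q0 * h ∈ C
    have hb : f ^ (q0 : ℕ) * h ∈ C := by simpa [ConeGe] using hq0
    have hb' : h * f ^ (q0 : ℕ) ∈ C := by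
      have := hC.2.2 _ ((f ^ (q0 : ℕ))⁻¹) hb
      simpa [mul_assoc] using this
    have hab : f ^ p * h⁻¹ * (h * f ^ (q0 : ℕ)) ∈ C := hC.2.1 _ _ hp hb'
    have hab' : f ^ (p + (q0 : ℤ)) ∈ C := by
      have e : f ^ p * h⁻¹ * (h * f ^ (q0 : ℕ)) = f ^ (p + (q0 : ℤ)) := by
        rw [zpow_add, zpow_natCast]
        group
      rwa [e] at hab
    have := dominant_nonneg hC hanti hf hab'
    omega
  have hup : ∀ a b : ℤ, a ∈ S → a ≤ b → b ∈ S := by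
    intro a b ha hab
    have h1 : f ^ (b - a) ∈ C := cone_zpow_mem hC hf.1 (by omega)
    have h2 : f ^ (b - a) * (f ^ a * h⁻¹) ∈ C := hC.2.1 _ _ h1 ha
    have e : f ^ (b - a) * (f ^ a * h⁻¹) = f ^ b * h⁻¹ := by
      rw [← mul_assoc, ← zpow_add, sub_add_cancel]
    rwa [e] at h2
  constructor
  · intro hp; exact csInf_le hbdd hp
  · intro hp; exact hup _ _ (Int.csInf_mem hne hbdd) hp

end Aux

/-- Real-analysis squeeze lemma: if `c k ≤ m * d k ≤ c k + m` and `c k / k → A`,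
then `d k / k → A / m`. -/
lemma squeeze_div {c d : ℕ → ℤ} {m : ℕ} (hm : 1 ≤ m) {A : ℝ}
    (h1 : ∀ k, c k ≤ (m : ℤ) * d k) (h2 : ∀ k, (m : ℤ) * d k ≤ c k + m)
    (hc : Tendsto (fun k : ℕ => (c k : ℝ) / (k : ℝ)) atTop (nhds A)) :
    Tendsto (fun k : ℕ => (d k : ℝ) / (k : ℝ)) atTop (nhds (A / (m : ℝ))) := by
  have hm0 : (0 : ℝ) < (m : ℝ) := by exact_mod_cast hm
  have hlow : Tendsto (fun k : ℕ => (c k : ℝ) / (k : ℝ) / (m : ℝ)) atTop (nhds (A / m)) :=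
    hc.div_const _
  have hhigh : Tendsto (fun k : ℕ => (c k : ℝ) / (k : ℝ) / (m : ℝ) + 1 / (k : ℝ)) atTop
      (nhds (A / m)) := by
    simpa using hlow.add tendsto_one_div_atTop_nhds_zero_nat
  refine tendsto_of_tendsto_of_tendsto_of_le_of_le' hlow hhigh ?_ ?_
  · filter_upwards [eventually_ge_atTop 1] with k hk
    have hk0 : (0 : ℝ) < (k : ℝ) := by exact_mod_cast hk
    have h1' : (c k : ℝ) ≤ (m : ℝ) * (d k : ℝ) := by exact_mod_cast h1 k
    rw [div_div, div_le_div_iff₀ (by positivity) hk0]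
    nlinarith
  · filter_upwards [eventually_ge_atTop 1] with k hk
    have hk0 : (0 : ℝ) < (k : ℝ) := by exact_mod_cast hk
    have h2' : (m : ℝ) * (d k : ℝ) ≤ (c k : ℝ) + (m : ℝ) := by exact_mod_cast h2 k
    have e : (c k : ℝ) / (k : ℝ) / (m : ℝ) + 1 / (k : ℝ) = ((c k : ℝ) + m) / ((k : ℝ) * m) := by
      field_simp
    rw [e, div_le_div_iff₀ hk0 (by positivity)]
    nlinarith

/-- Behaviour of the relative growth under iterations: for a dominant `f` and
`m ≥ 1`, `f^m` is a dominant, `γ(f, g^m) = m γ(f,g)`, `γ(f^m, g) = γ(f,g)/m`,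
and `γ(f^m, g^m) = γ(f,g)`. -/
theorem statement12 {G : Type*} [Group G] (C : Set G) (hC : IsNormalCone C)
    (hanti : ∀ f g : G, ConeGe C f g → ConeGe C g f → f = g)
    (f g : G) (hf : IsDominant C f) (m : ℕ) (hm : 1 ≤ m)
    (A : ℝ)
    (hA : Tendsto (fun k : ℕ => (gammaK C f g k : ℝ) / (k : ℝ)) atTop (nhds A)) :
    IsDominant C (f ^ m) ∧
    Tendsto (fun k : ℕ => (gammaK C f (g ^ m) k : ℝ) / (k : ℝ)) atTop (nhds ((m : ℝ) * A)) ∧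
    Tendsto (fun k : ℕ => (gammaK C (f ^ m) g k : ℝ) / (k : ℝ)) atTop (nhds (A / (m : ℝ))) ∧
    Tendsto (fun k : ℕ => (gammaK C (f ^ m) (g ^ m) k : ℝ) / (k : ℝ)) atTop (nhds A) := by
  have hmZ : (0 : ℤ) < (m : ℤ) := by exact_mod_cast hm
  set c : ℕ → ℤ := gammaK C f g with hc
  -- f^m is dominant
  have hdom : IsDominant C (f ^ m) := by
    refine ⟨cone_pow_mem hC hf.1 m, ?_, ?_⟩
    · intro habs
      have h7 : f⁻¹ = f ^ (m - 1) := by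
        have : f ^ (m - 1) * f = 1 := by
          rw [← pow_succ, Nat.sub_add_cancel hm, habs]
        calc f⁻¹ = f ^ (m - 1) * f * f⁻¹ := by rw [this]; group
          _ = f ^ (m - 1) := by group
      have h8 : f⁻¹ ∈ C := h7 ▸ cone_pow_mem hC hf.1 (m - 1)
      exact hf.2.1 (hanti f 1 (by simpa [ConeGe] using hf.1) (by simpa [ConeGe] using h8))
    · intro g'
      obtain ⟨p, hp⟩ := hf.2.2 g'
      refine ⟨p, ?_⟩
      have e : (f ^ m) ^ p = f ^ ((m - 1) * p) * f ^ p := by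
        rw [← pow_mul, ← pow_add]
        congr 1
        have : (m - 1) * p + p = (m - 1 + 1) * p := by ring
        rw [this, Nat.sub_add_cancel hm]
      have : f ^ ((m - 1) * p) * (f ^ p * g'⁻¹) ∈ C :=
        hC.2.1 _ _ (cone_pow_mem hC hf.1 _) hp
      simpa [ConeGe, e, mul_assoc] using this
  -- characterization of membership
  have hmem : ∀ (h : G) (p : ℤ),
      ConeGe C (f ^ p) h ↔ sInf {q : ℤ | ConeGe C (f ^ q) h} ≤ p :=
    cone_mem_iff_le hC hanti hf
  -- the set for base f^m equals Ici of the ceiling division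
  have hset : ∀ h : G, {p : ℤ | ConeGe C ((f ^ m) ^ p) h} =
      Set.Ici (-(-(sInf {q : ℤ | ConeGe C (f ^ q) h}) / (m : ℤ))) := by
    intro h
    ext p
    have e : ((f ^ m : G) ^ p) = f ^ ((m : ℤ) * p) := by
      rw [← zpow_natCast f m, ← zpow_mul]
    rw [Set.mem_setOf_eq, e, hmem h ((m : ℤ) * p), Set.mem_Ici]
    set cc := sInf {q : ℤ | ConeGe C (f ^ q) h}
    constructor
    · intro hcm
      have : -p ≤ -cc / (m : ℤ) := (Int.le_ediv_iff_mul_le hmZ).2 (by linarith)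
      omega
    · intro hp
      have : (-p) * (m : ℤ) ≤ -cc := (Int.le_ediv_iff_mul_le hmZ).1 (by omega)
      linarith
  -- bounds for ceiling division
  have hceil1 : ∀ a : ℤ, a ≤ (m : ℤ) * (-(-a / (m : ℤ))) := by
    intro a
    have := Int.ediv_mul_le (-a) (by omega : (m : ℤ) ≠ 0)
    nlinarith [this]
  have hceil2 : ∀ a : ℤ, (m : ℤ) * (-(-a / (m : ℤ))) ≤ a + m := by
    intro a
    have := Int.lt_ediv_add_one_mul_self (-a) hmZ
    nlinarith [this]
  -- gammaK C f (g^m) k = c (m*k)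
  have hgm : ∀ k : ℕ, gammaK C f (g ^ m) k = c (m * k) := by
    intro k
    rw [hc]
    unfold gammaK
    rw [← pow_mul]
  -- tendsto of c (m*k) / k to m*A
  have hmul : Tendsto (fun k : ℕ => m * k) atTop atTop :=
    tendsto_atTop_mono (fun k => Nat.le_mul_of_pos_left k (by omega)) tendsto_id
  have hT1 : Tendsto (fun k : ℕ => (c (m * k) : ℝ) / ((m * k : ℕ) : ℝ)) atTop (nhds A) :=
    hA.comp hmul
  have hT2 : Tendsto (fun k : ℕ => (c (m * k) : ℝ) / (k : ℝ)) atTop (nhds ((m : ℝ) * A)) := by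
    have := hT1.const_mul (m : ℝ)
    refine this.congr' ?_
    filter_upwards [eventually_ge_atTop 1] with k hk
    have hk0 : ((k : ℝ)) ≠ 0 := by positivity
    have hm0 : ((m : ℝ)) ≠ 0 := by positivity
    push_cast
    field_simp
  refine ⟨hdom, ?_, ?_, ?_⟩
  · -- γ(f, g^m)
    refine hT2.congr ?_
    intro k
    rw [hgm k]
  · -- γ(f^m, g)
    have heq : ∀ k : ℕ, gammaK C (f ^ m) g k = -(-(c k) / (m : ℤ)) := by
      intro k
      unfold gammaK
      rw [hset (g ^ k), csInf_Ici]
      rfl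
    have := squeeze_div hm (c := c) (d := fun k => -(-(c k) / (m : ℤ)))
      (fun k => hceil1 (c k)) (fun k => hceil2 (c k)) hA
    refine this.congr ?_
    intro k
    rw [heq k]
  · -- γ(f^m, g^m)
    have heq : ∀ k : ℕ, gammaK C (f ^ m) (g ^ m) k = -(-(c (m * k)) / (m : ℤ)) := by
      intro k
      unfold gammaK
      rw [← pow_mul, hset (g ^ (m * k)), csInf_Ici]
      rfl
    have hsq := squeeze_div hm (c := fun k => c (m * k)) (d := fun k => -(-(c (m * k)) / (m : ℤ)))
      (fun k => hceil1 (c (m * k))) (fun k => hceil2 (c (m * k))) hT2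
    have hAe : (m : ℝ) * A / (m : ℝ) = A := by
      field_simp
    rw [hAe] at hsq
    refine hsq.congr ?_
    intro k
    rw [heq k]
end

section
/- Let G be a group and C ⊆ G a normal cone whose induced relation ≥ is a partial order. Let r₋, r₊ : G → ℝ be functions satisfying: r₋(1) = 0; monotonicity, i.e. h ≥ h' implies r₋(h) ≥ r₋(h'); r₋(h) ≤ r₊(h) for all h ∈ G; r₋(g^k) ≥ k·r₋(g) for all k ∈ ℕ; and r₊(f^k) ≤ k·r₊(f) for all k ∈ ℕ. If f is a dominant, r₋(g) > 0 and r₊(f) > 0, then γ(f,g) ≥ r₋(g)/r₊(f); moreover γ_k(f,g) > 0 for every k ≥ 1. -/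
open Filter

/-- Abstract form of Theorem 3.3.A: if `r₋, r₊ : G → ℝ` satisfy normalization,
monotonicity of `r₋`, `r₋ ≤ r₊`, super-homogeneity of `r₋` and sub-homogeneity of
`r₊` under iterations, and if `f` is a dominant with `r₋(g) > 0` and `r₊(f) > 0`,
then `γ_k(f,g) > 0` for all `k ≥ 1` and `γ(f,g) ≥ r₋(g)/r₊(f)`. -/
theorem statement13 {G : Type*} [Group G] (C : Set G) (hC : IsNormalCone C)
    (hanti : ∀ f g : G, ConeGe C f g → ConeGe C g f → f = g)
    (rminus rplus : G → ℝ)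
    (hnorm : rminus (1 : G) = 0)
    (hmono : ∀ h h' : G, ConeGe C h h' → rminus h' ≤ rminus h)
    (hle : ∀ h : G, rminus h ≤ rplus h)
    (hiterminus : ∀ h : G, ∀ k : ℕ, (k : ℝ) * rminus h ≤ rminus (h ^ k))
    (hiterplus : ∀ h : G, ∀ k : ℕ, rplus (h ^ k) ≤ (k : ℝ) * rplus h)
    (f g : G) (hf : IsDominant C f) (hgpos : 0 < rminus g) (hfpos : 0 < rplus f) :
    (∀ k : ℕ, 1 ≤ k → 0 < gammaK C f g k) ∧
    ∀ L : ℝ, Tendsto (fun k : ℕ => (gammaK C f g k : ℝ) / (k : ℝ)) atTop (nhds L) →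
      rminus g / rplus f ≤ L := by
  -- setup
  obtain ⟨h1, hmul, hconj⟩ := hC
  have hpowC : ∀ n : ℕ, f ^ n ∈ C := by
    intro n
    induction n with
    | zero => simpa using h1
    | succ n ih => rw [pow_succ]; exact hmul _ _ ih hf.1
  have hne : ∀ k : ℕ, ({p : ℤ | ConeGe C (f ^ p) (g ^ k)}).Nonempty := by
    intro k
    obtain ⟨p, hp⟩ := hf.2.2 (g ^ k)
    exact ⟨(p : ℤ), by simpa [ConeGe, zpow_natCast] using hp⟩
  have hlb : ∀ k : ℕ, 1 ≤ k → ∀ p ∈ {p : ℤ | ConeGe C (f ^ p) (g ^ k)}, (1 : ℤ) ≤ p := by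
    intro k hk p hp
    by_contra hcon
    push_neg at hcon
    have hp0 : p ≤ 0 := by omega
    have hq : f ^ (-p) ∈ C := by
      have : f ^ ((-p).toNat) ∈ C := hpowC _
      rwa [← zpow_natCast, Int.toNat_of_nonneg (by omega)] at this
    have hgk : (g ^ k)⁻¹ ∈ C := by
      have := hmul _ _ hq hp
      rwa [← mul_assoc, ← zpow_add, neg_add_cancel, zpow_zero, one_mul] at this
    have h1ge : ConeGe C (1 : G) (g ^ k) := by simpa [ConeGe] using hgk
    have hr1 : rminus (g ^ k) ≤ 0 := by
      have := hmono _ _ h1ge; rwa [hnorm] at this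
    have hrpos : (0 : ℝ) < rminus (g ^ k) := by
      have h2 := hiterminus g k
      have : (1 : ℝ) * rminus g ≤ (k : ℝ) * rminus g := by
        apply mul_le_mul_of_nonneg_right _ hgpos.le
        exact_mod_cast hk
      nlinarith
    linarith
  have hbdd : ∀ k : ℕ, 1 ≤ k → BddBelow {p : ℤ | ConeGe C (f ^ p) (g ^ k)} := by
    intro k hk
    exact ⟨1, fun p hp => hlb k hk p hp⟩
  have hpos : ∀ k : ℕ, 1 ≤ k → 0 < gammaK C f g k := by
    intro k hk
    have h := hlb k hk _ (Int.csInf_mem (hne k) (hbdd k hk))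
    unfold gammaK
    omega
  refine ⟨hpos, ?_⟩
  intro L hL
  have key : ∀ k : ℕ, 1 ≤ k → rminus g / rplus f ≤ (gammaK C f g k : ℝ) / (k : ℝ) := by
    intro k hk
    set p := gammaK C f g k with hpdef
    have hpmem : p ∈ {p : ℤ | ConeGe C (f ^ p) (g ^ k)} := Int.csInf_mem (hne k) (hbdd k hk)
    have hp1 : 1 ≤ p := hlb k hk p hpmem
    have hkpos : (0 : ℝ) < (k : ℝ) := by exact_mod_cast hk
    rw [div_le_div_iff₀ hfpos hkpos]
    -- chain: k * rminus g ≤ rminus (g^k) ≤ rminus (f^p) ≤ rplus (f^p) ≤ p * rplus f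
    have c1 : (k : ℝ) * rminus g ≤ rminus (g ^ k) := hiterminus g k
    have c2 : rminus (g ^ k) ≤ rminus (f ^ p) := hmono _ _ hpmem
    have hfp : f ^ p = f ^ (p.toNat) := by
      rw [← zpow_natCast, Int.toNat_of_nonneg (by omega)]
    have c3 : rminus (f ^ p) ≤ rplus (f ^ p) := hle _
    have c4 : rplus (f ^ p) ≤ (p : ℝ) * rplus f := by
      rw [hfp]
      have := hiterplus f p.toNat
      have hcast : ((p.toNat : ℕ) : ℝ) = (p : ℝ) := by
        exact_mod_cast Int.toNat_of_nonneg (show (0:ℤ) ≤ p by omega)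
      rw [hcast] at this
      exact this
    calc rminus g * (k : ℝ) = (k : ℝ) * rminus g := by ring
      _ ≤ (p : ℝ) * rplus f := by linarith
      _ = (p : ℝ) * rplus f := rfl
  refine ge_of_tendsto hL ?_
  filter_upwards [eventually_ge_atTop 1] with k hk using key k hk
end

section
/- Let f : ℝ → ℝ be a continuous monotone degree-one lift of a circle map (f is monotone, continuous, and f(x+1) = f(x)+1 for all x) such that f(x) > x for all x ∈ ℝ. For each integer k ≥ 1 let b_k = inf {p ∈ ℕ : f^p(x) ≥ x + k for all x ∈ ℝ} (this set is nonempty). Then Rot(f) > 0 and lim_{k→∞} b_k/k = 1/Rot(f). -/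
open Filter

/-- For a continuous degree-one lift `f` of a circle map with `f(x) > x` for all `x`,
set `b_k = inf {p ∈ ℕ | ∀ x, f^p(x) ≥ x + k}`. Each of these sets is nonempty,
`Rot(f) > 0`, and `b_k / k` converges to `1 / Rot(f)`.
This expresses `γ(f,e) = 1 / Rot(f)` for the unit translation `e`. -/
theorem statement16 (f : CircleDeg1Lift) (hf : Continuous f)
    (hpos : ∀ x : ℝ, x < f x) :
    (∀ k : ℕ, 1 ≤ k → {p : ℕ | ∀ x : ℝ, x + (k : ℝ) ≤ (f ^ p) x}.Nonempty) ∧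
    0 < f.translationNumber ∧
    Tendsto
      (fun k : ℕ => ((sInf {p : ℕ | ∀ x : ℝ, x + (k : ℝ) ≤ (f ^ p) x} : ℕ) : ℝ) / (k : ℝ))
      atTop (nhds (1 / f.translationNumber)) := by
  set τ := f.translationNumber with hτ
  have hτpos : 0 < τ := by
    obtain ⟨x, hx⟩ := f.exists_eq_add_translationNumber hf
    have := hpos x
    rw [hx] at this
    linarith
  -- membership lemma : if k < p * τ then p is in the set
  have hmem : ∀ k p : ℕ, (k : ℝ) < p * τ → p ∈ {p : ℕ | ∀ x : ℝ, x + (k : ℝ) ≤ (f ^ p) x} := by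
    intro k p hk x
    have hk' : (k : ℝ) < (f ^ p).translationNumber := by
      rwa [f.translationNumber_pow]
    exact ((f ^ p).lt_map_of_nat_lt_translationNumber hk' x).le
  have hNmem : ∀ k : ℕ, (⌊(k : ℝ) / τ⌋₊ + 1) ∈ {p : ℕ | ∀ x : ℝ, x + (k : ℝ) ≤ (f ^ p) x} := by
    intro k
    apply hmem
    have h1 : (k : ℝ) / τ < (⌊(k : ℝ) / τ⌋₊ + 1 : ℕ) := by
      push_cast
      exact Nat.lt_floor_add_one _
    calc (k : ℝ) = (k : ℝ) / τ * τ := by field_simp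
      _ < (⌊(k : ℝ) / τ⌋₊ + 1 : ℕ) * τ := by
          exact mul_lt_mul_of_pos_right h1 hτpos
  have hne : ∀ k : ℕ, {p : ℕ | ∀ x : ℝ, x + (k : ℝ) ≤ (f ^ p) x}.Nonempty :=
    fun k => ⟨_, hNmem k⟩
  refine ⟨fun k _ => hne k, hτpos, ?_⟩
  -- lower bound: for p in the set, k ≤ p * τ
  have hlow : ∀ k : ℕ, (k : ℝ) ≤ (sInf {p : ℕ | ∀ x : ℝ, x + (k : ℝ) ≤ (f ^ p) x} : ℕ) * τ := by
    intro k
    have hmem' := Nat.sInf_mem (hne k)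
    set p := sInf {p : ℕ | ∀ x : ℝ, x + (k : ℝ) ≤ (f ^ p) x}
    have : (k : ℝ) ≤ (f ^ p).translationNumber :=
      (f ^ p).le_translationNumber_of_add_le hmem'
    rwa [f.translationNumber_pow] at this
  -- upper bound
  have hup : ∀ k : ℕ, ((sInf {p : ℕ | ∀ x : ℝ, x + (k : ℝ) ≤ (f ^ p) x} : ℕ) : ℝ)
      ≤ (k : ℝ) / τ + 1 := by
    intro k
    have h1 : sInf {p : ℕ | ∀ x : ℝ, x + (k : ℝ) ≤ (f ^ p) x} ≤ ⌊(k : ℝ) / τ⌋₊ + 1 :=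
      Nat.sInf_le (hNmem k)
    have h2 : ((⌊(k : ℝ) / τ⌋₊ : ℝ) + 1) ≤ (k : ℝ) / τ + 1 := by
      have := Nat.floor_le (a := (k : ℝ) / τ) (by positivity)
      linarith
    calc ((sInf {p : ℕ | ∀ x : ℝ, x + (k : ℝ) ≤ (f ^ p) x} : ℕ) : ℝ)
        ≤ ((⌊(k : ℝ) / τ⌋₊ + 1 : ℕ) : ℝ) := by exact_mod_cast h1
      _ ≤ (k : ℝ) / τ + 1 := by push_cast; exact h2
  -- squeeze
  have hA : Tendsto (fun _ : ℕ => 1 / τ) atTop (nhds (1 / τ)) := tendsto_const_nhds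
  have hB : Tendsto (fun k : ℕ => 1 / τ + 1 / (k : ℝ)) atTop (nhds (1 / τ)) := by
    have : Tendsto (fun n : ℕ => 1 / (n : ℝ)) atTop (nhds 0) := tendsto_one_div_atTop_nhds_zero_nat
    simpa using hA.add this
  refine tendsto_of_tendsto_of_tendsto_of_le_of_le' hA hB ?_ ?_
  · filter_upwards [eventually_ge_atTop 1] with k hk
    have hk0 : (0 : ℝ) < k := by exact_mod_cast hk
    rw [div_le_div_iff₀ hτpos hk0, one_mul]
    have := hlow k
    linarith [mul_comm ((sInf {p : ℕ | ∀ x : ℝ, x + (k : ℝ) ≤ (f ^ p) x} : ℕ) : ℝ) τ]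
  · filter_upwards [eventually_ge_atTop 1] with k hk
    have hk0 : (0 : ℝ) < k := by exact_mod_cast hk
    rw [div_le_iff₀ hk0]
    have := hup k
    have : ((sInf {p : ℕ | ∀ x : ℝ, x + (k : ℝ) ≤ (f ^ p) x} : ℕ) : ℝ)
        ≤ (1 / τ + 1 / (k : ℝ)) * k := by
      rw [add_mul]
      rw [one_div_mul_eq_div, div_mul_eq_mul_div, one_mul, div_self hk0.ne']
      calc _ ≤ (k : ℝ) / τ + 1 := hup k
        _ = (k : ℝ) / τ + 1 := rfl
    exact this
  done
end

section
/- Let f, g : ℝ → ℝ be continuous monotone degree-one lifts of circle maps (monotone, continuous, with f(x+1) = f(x)+1 and g(x+1) = g(x)+1 for all x) such that f(x) > x and g(x) > x for all x ∈ ℝ. For each integer k ≥ 1 let c_k = inf {p ∈ ℕ : f^p(x) ≥ g^k(x) for all x ∈ ℝ} (this set is nonempty). Then lim_{k→∞} c_k/k = Rot(g)/Rot(f). -/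
open Filter

/-- For continuous degree-one lifts `f, g` of circle maps with `f(x) > x` and
`g(x) > x` for all `x`, set `c_k = inf {p ∈ ℕ | ∀ x, f^p(x) ≥ g^k(x)}`. Each of
these sets is nonempty and `c_k / k` converges to `Rot(g) / Rot(f)`.
This expresses formula (1.7.C): `γ(f,g) = Rot(g)/Rot(f)`. -/
theorem statement17 (f g : CircleDeg1Lift) (hf : Continuous f) (hg : Continuous g)
    (hfpos : ∀ x : ℝ, x < f x) (hgpos : ∀ x : ℝ, x < g x) :
    (∀ k : ℕ, 1 ≤ k → {p : ℕ | ∀ x : ℝ, (g ^ k) x ≤ (f ^ p) x}.Nonempty) ∧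
    Tendsto
      (fun k : ℕ => ((sInf {p : ℕ | ∀ x : ℝ, (g ^ k) x ≤ (f ^ p) x} : ℕ) : ℝ) / (k : ℝ))
      atTop (nhds (g.translationNumber / f.translationNumber)) := by
  set τf := f.translationNumber with hτf_def
  set τg := g.translationNumber with hτg_def
  have hτf : 0 < τf :=
    f.lt_translationNumber_of_forall_add_lt hf (fun x => by simpa using hfpos x)
  have hτg : 0 < τg :=
    g.lt_translationNumber_of_forall_add_lt hg (fun x => by simpa using hgpos x)
  -- the explicit witness
  set P : ℕ → ℕ := fun k => ⌈((k : ℝ) * τg + 2) / τf⌉₊ with hP_def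
  have hPnn : ∀ k : ℕ, (0 : ℝ) ≤ ((k : ℝ) * τg + 2) / τf := fun k => by positivity
  have hPmem : ∀ k : ℕ, P k ∈ {p : ℕ | ∀ x : ℝ, (g ^ k) x ≤ (f ^ p) x} := by
    intro k
    intro x
    have h1 : (g ^ k) x < x + (k : ℝ) * τg + 1 := by
      have := (g ^ k).map_lt_add_translationNumber_add_one x
      rwa [g.translationNumber_pow k] at this
    have h2 : (P k : ℝ) * τf - 1 < (f ^ P k) x - x := by
      have hle : (f ^ P k).translationNumber ≤ (⌈(f ^ P k) x - x⌉ : ℝ) := by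
        exact_mod_cast (f ^ P k).translationNumber_le_ceil_sub x
      have hceil : (⌈(f ^ P k) x - x⌉ : ℝ) < (f ^ P k) x - x + 1 := Int.ceil_lt_add_one _
      rw [f.translationNumber_pow (P k)] at hle
      linarith
    have h3 : (k : ℝ) * τg + 2 ≤ (P k : ℝ) * τf := by
      have := Nat.le_ceil (((k : ℝ) * τg + 2) / τf)
      rw [div_le_iff₀ hτf] at this
      linarith
    linarith
  have hne : ∀ k : ℕ, {p : ℕ | ∀ x : ℝ, (g ^ k) x ≤ (f ^ p) x}.Nonempty :=
    fun k => ⟨P k, hPmem k⟩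
  refine ⟨fun k _ => hne k, ?_⟩
  set c : ℕ → ℕ := fun k => sInf {p : ℕ | ∀ x : ℝ, (g ^ k) x ≤ (f ^ p) x} with hc_def
  have hlow : ∀ k : ℕ, (k : ℝ) * τg ≤ (c k : ℝ) * τf := by
    intro k
    have hmem : c k ∈ {p : ℕ | ∀ x : ℝ, (g ^ k) x ≤ (f ^ p) x} := Nat.sInf_mem (hne k)
    have hle : g ^ k ≤ f ^ c k := fun x => hmem x
    have := CircleDeg1Lift.translationNumber_mono hle
    rwa [g.translationNumber_pow k, f.translationNumber_pow (c k)] at this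
  have hupp : ∀ k : ℕ, (c k : ℝ) ≤ ((k : ℝ) * τg + 2) / τf + 1 := by
    intro k
    have h1 : c k ≤ P k := Nat.sInf_le (hPmem k)
    have h2 : (P k : ℝ) < ((k : ℝ) * τg + 2) / τf + 1 := Nat.ceil_lt_add_one (hPnn k)
    exact le_trans (by exact_mod_cast h1) h2.le
  -- squeeze
  have hQ : Tendsto (fun k : ℕ => τg / τf + (2 / τf + 1) / (k : ℝ)) atTop
      (nhds (τg / τf)) := by
    have := (tendsto_const_nhds (x := τg / τf) (f := atTop (α := ℕ))).add
        (tendsto_const_div_atTop_nhds_zero_nat (2 / τf + 1))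
    simpa using this
  refine tendsto_of_tendsto_of_tendsto_of_le_of_le' tendsto_const_nhds hQ ?_ ?_
  · filter_upwards [eventually_ge_atTop 1] with k hk
    have hk0 : (0 : ℝ) < (k : ℝ) := by exact_mod_cast hk
    rw [div_le_div_iff₀ hτf hk0]
    have := hlow k
    nlinarith
  · filter_upwards [eventually_ge_atTop 1] with k hk
    have hk0 : (0 : ℝ) < (k : ℝ) := by exact_mod_cast hk
    rw [div_le_iff₀ hk0]
    have h := hupp k
    have hexp : (τg / τf + (2 / τf + 1) / (k : ℝ)) * (k : ℝ)
        = ((k : ℝ) * τg + 2) / τf + 1 := by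
      field_simp
      ring
    rw [hexp]
    exact h
end
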